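/- Let r, R be positive integers and f(x,y,t) = [(1-xy)(1-t x^r)(1-t y^R) + (1-t^2)(x-x^r)(y-y^R)] / [(1-t x^r)(1-t y^R)(1-x)(1-y)(1-tx)(1-ty)]. If n is a nonnegative integer with r \geq n, then all coefficients of x^j y^k in the coefficient of t^n of the power series expansion of f are nonnegative. -/

import Mathlib

open MvPowerSeries

noncomputable def fBG (r R : ℕ) : MvPowerSeries (Fin 3) ℚ :=
  let x : MvPowerSeries (Fin 3) ℚ := X 0
  let y : MvPowerSeries (Fin 3) ℚ := X 1
  let t : MvPowerSeries (Fin 3) ℚ := X 2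
  ((1 - x * y) * (1 - t * x ^ r) * (1 - t * y ^ R) +
      (1 - t ^ 2) * (x - x ^ r) * (y - y ^ R)) *
    ((1 - t * x ^ r) * (1 - t * y ^ R) * (1 - x) * (1 - y) *
      (1 - t * x) * (1 - t * y))⁻¹

open MvPowerSeries Finsupp Finset
open scoped Classical

namespace BGaux

noncomputable def geom (e : Fin 3 →₀ ℕ) : MvPowerSeries (Fin 3) ℚ :=
  fun d => if ∃ i : ℕ, d = i • e then 1 else 0

lemma coeff_geom (e d : Fin 3 →₀ ℕ) :
    MvPowerSeries.coeff d (geom e) = if ∃ i : ℕ, d = i • e then 1 else 0 := rfl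

lemma geom_inv (e : Fin 3 →₀ ℕ) (he : e ≠ 0) :
    (1 - monomial e 1) * geom e = 1 := by
  ext d
  rw [sub_mul, one_mul, map_sub, coeff_monomial_mul, coeff_geom]
  by_cases hd : d = 0
  · subst hd
    rw [if_pos ⟨0, by simp⟩, if_neg (fun hle => he (le_antisymm hle zero_le))]
    simp
  · have hcoeff0 : (MvPowerSeries.coeff d) (1 : MvPowerSeries (Fin 3) ℚ) = 0 := by
      rw [MvPowerSeries.coeff_one, if_neg hd]
    rw [hcoeff0]
    by_cases hle : e ≤ d
    · rw [if_pos hle, one_mul, coeff_geom]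
      have hiff : (∃ i : ℕ, d = i • e) ↔ (∃ i : ℕ, d - e = i • e) := by
        constructor
        · rintro ⟨i, rfl⟩
          have hi : i ≠ 0 := by rintro rfl; simp at hd
          rcases Nat.exists_eq_succ_of_ne_zero hi with ⟨m, rfl⟩
          exact ⟨m, by rw [succ_nsmul]; simp⟩
        · rintro ⟨i, hi⟩
          exact ⟨i + 1, by rw [← tsub_add_cancel_of_le hle, hi, succ_nsmul]⟩
      by_cases hex : ∃ i : ℕ, d = i • e
      · rw [if_pos hex, if_pos (hiff.mp hex)]; ring
      · rw [if_neg hex, if_neg (fun h => hex (hiff.mpr h))]; ring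
    · rw [if_neg hle, if_neg, sub_zero]
      rintro ⟨i, rfl⟩
      have hi : i ≠ 0 := by rintro rfl; simp at hd
      rcases Nat.exists_eq_succ_of_ne_zero hi with ⟨m, rfl⟩
      exact hle (by rw [succ_nsmul]; exact le_add_self)


noncomputable def dd (j k n : ℕ) : Fin 3 →₀ ℕ := single 0 j + single 1 k + single 2 n

@[simp] lemma dd_apply0 (j k n : ℕ) : dd j k n 0 = j := by
  simp [dd, Finsupp.single_apply]
@[simp] lemma dd_apply1 (j k n : ℕ) : dd j k n 1 = k := by
  simp [dd, Finsupp.single_apply]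
@[simp] lemma dd_apply2 (j k n : ℕ) : dd j k n 2 = n := by
  simp [dd, Finsupp.single_apply]

noncomputable def etp (p : ℕ) : Fin 3 →₀ ℕ := single 0 p + single 2 1
noncomputable def etq (q : ℕ) : Fin 3 →₀ ℕ := single 1 q + single 2 1

lemma smul_etp (i p : ℕ) : i • etp p = single 0 (i * p) + single 2 i := by
  simp [etp, smul_add, Finsupp.smul_single, smul_eq_mul]

lemma smul_etq (i q : ℕ) : i • etq q = single 1 (i * q) + single 2 i := by
  simp [etq, smul_add, Finsupp.smul_single, smul_eq_mul]

@[simp] lemma smul_etp_apply0 (i p : ℕ) : (i • etp p) 0 = i * p := by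
  simp [smul_etp, Finsupp.single_apply]
@[simp] lemma smul_etp_apply1 (i p : ℕ) : (i • etp p) 1 = 0 := by
  simp [smul_etp, Finsupp.single_apply]
@[simp] lemma smul_etp_apply2 (i p : ℕ) : (i • etp p) 2 = i := by
  simp [smul_etp, Finsupp.single_apply]
@[simp] lemma smul_etq_apply0 (i q : ℕ) : (i • etq q) 0 = 0 := by
  simp [smul_etq, Finsupp.single_apply]
@[simp] lemma smul_etq_apply1 (i q : ℕ) : (i • etq q) 1 = i * q := by
  simp [smul_etq, Finsupp.single_apply]
@[simp] lemma smul_etq_apply2 (i q : ℕ) : (i • etq q) 2 = i := by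
  simp [smul_etq, Finsupp.single_apply]

@[simp] lemma etp_apply0 (p : ℕ) : etp p 0 = p := by simp [etp, Finsupp.single_apply]
@[simp] lemma etp_apply1 (p : ℕ) : etp p 1 = 0 := by simp [etp, Finsupp.single_apply]
@[simp] lemma etp_apply2 (p : ℕ) : etp p 2 = 1 := by simp [etp, Finsupp.single_apply]
@[simp] lemma etq_apply0 (q : ℕ) : etq q 0 = 0 := by simp [etq, Finsupp.single_apply]
@[simp] lemma etq_apply1 (q : ℕ) : etq q 1 = q := by simp [etq, Finsupp.single_apply]
@[simp] lemma etq_apply2 (q : ℕ) : etq q 2 = 1 := by simp [etq, Finsupp.single_apply]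

/-- Stage A : geom x * geom y -/
lemma coeff_gxy (d : Fin 3 →₀ ℕ) :
    MvPowerSeries.coeff d (geom (single 0 1) * geom (single 1 1)) =
      if d 2 = 0 then 1 else 0 := by
  rw [coeff_mul]
  by_cases h2 : d 2 = 0
  · rw [if_pos h2]
    have hmem : ((single 0 (d 0), single 1 (d 1)) :
        (Fin 3 →₀ ℕ) × (Fin 3 →₀ ℕ)) ∈ antidiagonal d := by
      rw [Finset.HasAntidiagonal.mem_antidiagonal]
      ext a
      fin_cases a <;> simp [Finsupp.single_apply] <;> omega
    rw [Finset.sum_eq_single_of_mem _ hmem]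
    · rw [coeff_geom, coeff_geom, if_pos ⟨d 0, by simp [Finsupp.smul_single]⟩,
        if_pos ⟨d 1, by simp [Finsupp.smul_single]⟩]
      norm_num
    · rintro ⟨u, v⟩ hmem' hne
      rw [Finset.HasAntidiagonal.mem_antidiagonal] at hmem'
      rw [coeff_geom, coeff_geom]
      split_ifs with hu hv
      · exfalso
        obtain ⟨i, rfl⟩ := hu
        obtain ⟨i', rfl⟩ := hv
        apply hne
        have e0 : i = d 0 := by
          have := DFunLike.congr_fun hmem' 0
          simpa [Finsupp.single_apply] using this
        have e1 : i' = d 1 := by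
          have := DFunLike.congr_fun hmem' 1
          simpa [Finsupp.single_apply] using this
        simp [Finsupp.smul_single, e0, e1, Prod.ext_iff]
      all_goals norm_num
  · rw [if_neg h2]
    apply Finset.sum_eq_zero
    rintro ⟨u, v⟩ hmem'
    rw [Finset.HasAntidiagonal.mem_antidiagonal] at hmem'
    rw [coeff_geom, coeff_geom]
    split_ifs with hu hv
    · exfalso
      obtain ⟨i, rfl⟩ := hu
      obtain ⟨i', rfl⟩ := hv
      apply h2
      have := DFunLike.congr_fun hmem' 2
      simpa [Finsupp.single_apply] using this.symm
    all_goals norm_num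

/-- Stage B : geom (t x^p) * geom (t y^q) -/
lemma coeff_gtt (p q : ℕ) (hp : 0 < p) (d : Fin 3 →₀ ℕ) :
    MvPowerSeries.coeff d (geom (etp p) * geom (etq q)) =
      if ∃ γ δ : ℕ, γ * p = d 0 ∧ δ * q = d 1 ∧ γ + δ = d 2 then 1 else 0 := by
  rw [coeff_mul]
  by_cases hC : ∃ γ δ : ℕ, γ * p = d 0 ∧ δ * q = d 1 ∧ γ + δ = d 2
  · rw [if_pos hC]
    obtain ⟨γ, δ, h0, h1, h2⟩ := hC
    have hmem : ((γ • etp p, δ • etq q) : (Fin 3 →₀ ℕ) × (Fin 3 →₀ ℕ)) ∈ antidiagonal d := by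
      rw [Finset.HasAntidiagonal.mem_antidiagonal]
      ext a
      fin_cases a <;> simp <;> omega
    rw [Finset.sum_eq_single_of_mem _ hmem]
    · rw [coeff_geom, coeff_geom, if_pos ⟨γ, rfl⟩, if_pos ⟨δ, rfl⟩]
      norm_num
    · rintro ⟨u, v⟩ hmem' hne
      rw [Finset.HasAntidiagonal.mem_antidiagonal] at hmem'
      rw [coeff_geom, coeff_geom]
      split_ifs with hu hv
      · exfalso
        obtain ⟨i, rfl⟩ := hu
        obtain ⟨i', rfl⟩ := hv
        apply hne
        have e0 : i * p = d 0 := by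
          have := DFunLike.congr_fun hmem' 0
          simpa using this
        have e2 : i + i' = d 2 := by
          have := DFunLike.congr_fun hmem' 2
          simpa using this
        have hiγ : i = γ := by
          have : i * p = γ * p := by rw [e0, h0]
          exact Nat.eq_of_mul_eq_mul_right hp this
        have hi'δ : i' = δ := by omega
        simp [hiγ, hi'δ, Prod.ext_iff]
      all_goals norm_num
  · rw [if_neg hC]
    apply Finset.sum_eq_zero
    rintro ⟨u, v⟩ hmem'
    rw [Finset.HasAntidiagonal.mem_antidiagonal] at hmem'
    rw [coeff_geom, coeff_geom]
    split_ifs with hu hv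
    · exfalso
      obtain ⟨i, rfl⟩ := hu
      obtain ⟨i', rfl⟩ := hv
      exact hC ⟨i, i', by simpa using DFunLike.congr_fun hmem' 0,
        by simpa using DFunLike.congr_fun hmem' 1,
        by simpa using DFunLike.congr_fun hmem' 2⟩
    all_goals norm_num

noncomputable def Gser (p q : ℕ) : MvPowerSeries (Fin 3) ℚ :=
  geom (etp p) * geom (etq q) * (geom (single 0 1) * geom (single 1 1))

lemma coeff_Gser (p q : ℕ) (hp : 0 < p) (j k n : ℕ) :
    MvPowerSeries.coeff (dd j k n) (Gser p q) =
      (((range (n+1)).filter (fun γ => γ * p ≤ j ∧ (n - γ) * q ≤ k)).card : ℚ) := by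
  rw [Gser, coeff_mul]
  simp only [coeff_gtt p q hp, coeff_gxy, ite_mul, one_mul, zero_mul, mul_ite, mul_one, mul_zero]
  have : ∀ x : (Fin 3 →₀ ℕ) × (Fin 3 →₀ ℕ),
      (if x.2 2 = 0 then
        (if ∃ γ δ : ℕ, γ * p = x.1 0 ∧ δ * q = x.1 1 ∧ γ + δ = x.1 2 then (1:ℚ) else 0) else 0)
      = if x.2 2 = 0 ∧ (∃ γ δ : ℕ, γ * p = x.1 0 ∧ δ * q = x.1 1 ∧ γ + δ = x.1 2)
        then 1 else 0 := by
    intro x; rw [ite_and]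
  rw [Finset.sum_congr rfl fun x _ => this x, Finset.sum_boole]
  congr 1
  apply Finset.card_nbij' (i := fun x : (Fin 3 →₀ ℕ) × (Fin 3 →₀ ℕ) => x.1 0 / p)
    (j := fun γ => (γ • etp p + (n - γ) • etq q, dd (j - γ * p) (k - (n - γ) * q) 0))
  · rintro ⟨u, v⟩ hx
    rw [Finset.mem_coe, Finset.mem_filter, Finset.HasAntidiagonal.mem_antidiagonal] at hx
    obtain ⟨huv, hv2, ⟨γ, δ, h0, h1, h2⟩⟩ := hx
    dsimp only at h0 h1 h2 hv2 ⊢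
    have e0 : u 0 + v 0 = j := by simpa using DFunLike.congr_fun huv 0
    have e1 : u 1 + v 1 = k := by simpa using DFunLike.congr_fun huv 1
    have e2 : u 2 + v 2 = n := by simpa using DFunLike.congr_fun huv 2
    have hγ : u 0 / p = γ := by rw [← h0, Nat.mul_div_cancel _ hp]
    rw [Finset.mem_coe, Finset.mem_filter, Finset.mem_range, hγ]
    refine ⟨by omega, by omega, ?_⟩
    have : n - γ = δ := by omega
    rw [this]; omega
  · rintro γ hγ
    rw [Finset.mem_coe, Finset.mem_filter, Finset.mem_range] at hγ
    obtain ⟨hγn, hpj, hqk⟩ := hγ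
    rw [Finset.mem_coe, Finset.mem_filter, Finset.HasAntidiagonal.mem_antidiagonal]
    refine ⟨?_, by simp, ⟨γ, n - γ, by simp, by simp, by simp⟩⟩
    ext a
    fin_cases a <;> simp <;> omega
  · rintro ⟨u, v⟩ hx
    rw [Finset.mem_coe, Finset.mem_filter, Finset.HasAntidiagonal.mem_antidiagonal] at hx
    obtain ⟨huv, hv2, ⟨γ, δ, h0, h1, h2⟩⟩ := hx
    dsimp only at h0 h1 h2 hv2 ⊢
    have e0 : u 0 + v 0 = j := by simpa using DFunLike.congr_fun huv 0
    have e1 : u 1 + v 1 = k := by simpa using DFunLike.congr_fun huv 1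
    have e2 : u 2 + v 2 = n := by simpa using DFunLike.congr_fun huv 2
    have hγ : u 0 / p = γ := by rw [← h0, Nat.mul_div_cancel _ hp]
    rw [hγ]
    have hδ : n - γ = δ := by omega
    rw [hδ]
    refine Prod.ext ?_ ?_
    · show γ • etp p + δ • etq q = u
      ext a
      fin_cases a <;> simp <;> omega
    · show dd (j - γ * p) (k - δ * q) 0 = v
      ext a
      fin_cases a <;> simp <;> omega
  · rintro γ hγ
    rw [Finset.mem_coe, Finset.mem_filter, Finset.mem_range] at hγ
    show (γ • etp p + (n - γ) • etq q) 0 / p = γ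
    simp [Nat.mul_div_cancel _ hp]


noncomputable def Tser (p q : ℕ) : MvPowerSeries (Fin 3) ℚ :=
  (1 - monomial (single 0 p + single 1 q) 1) * Gser p q

lemma le_dd_iff (p q j k n : ℕ) :
    (single 0 p + single 1 q : Fin 3 →₀ ℕ) ≤ dd j k n ↔ p ≤ j ∧ q ≤ k := by
  rw [Finsupp.le_def]
  constructor
  · intro h
    refine ⟨?_, ?_⟩
    · have := h 0; simpa [Finsupp.single_apply] using this
    · have := h 1; simpa [Finsupp.single_apply] using this
  · rintro ⟨h1, h2⟩ a
    fin_cases a <;> simp [Finsupp.single_apply] <;> omega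

lemma dd_sub (p q j k n : ℕ) :
    dd j k n - (single 0 p + single 1 q : Fin 3 →₀ ℕ) = dd (j - p) (k - q) n := by
  ext a
  fin_cases a <;> simp [Finsupp.tsub_apply, Finsupp.single_apply]

lemma coeff_Tser (p q : ℕ) (hp : 0 < p) (hq : 0 < q) (j k n : ℕ) :
    MvPowerSeries.coeff (dd j k n) (Tser p q) =
      ∑ γ ∈ range (n+1),
        ((if γ * p ≤ j ∧ (n - γ) * q ≤ k then (1:ℚ) else 0) -
         (if γ * p + p ≤ j ∧ (n - γ) * q + q ≤ k then (1:ℚ) else 0)) := by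
  rw [Tser, sub_mul, one_mul, map_sub, coeff_monomial_mul, coeff_Gser p q hp, dd_sub]
  simp only [le_dd_iff]
  rw [Finset.sum_sub_distrib]
  have hcard : ∀ (j' k' : ℕ),
      ((((range (n+1)).filter (fun γ => γ * p ≤ j' ∧ (n - γ) * q ≤ k')).card : ℚ)) =
        ∑ γ ∈ range (n+1), (if γ * p ≤ j' ∧ (n - γ) * q ≤ k' then (1:ℚ) else 0) := by
    intro j' k'
    rw [Finset.sum_boole]
  rw [hcard]
  congr 1
  by_cases hc : p ≤ j ∧ q ≤ k
  · rw [if_pos hc, one_mul, coeff_Gser p q hp, hcard]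
    apply Finset.sum_congr rfl
    intro γ _
    apply if_congr _ rfl rfl
    omega
  · rw [if_neg hc]
    symm
    apply Finset.sum_eq_zero
    intro γ _
    rw [if_neg]
    omega

lemma etp_ne_zero (p : ℕ) : etp p ≠ 0 := by
  intro h
  have := DFunLike.congr_fun h 2
  simp at this

lemma etq_ne_zero (q : ℕ) : etq q ≠ 0 := by
  intro h
  have := DFunLike.congr_fun h 2
  simp at this

lemma X_mul_X_pow_eq (p : ℕ) :
    (X 2 : MvPowerSeries (Fin 3) ℚ) * X 0 ^ p = monomial (etp p) 1 := by
  rw [X_def, X_pow_eq, monomial_mul_monomial, one_mul, etp, add_comm]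

lemma X_mul_X_pow_eq' (q : ℕ) :
    (X 2 : MvPowerSeries (Fin 3) ℚ) * X 1 ^ q = monomial (etq q) 1 := by
  rw [X_def, X_pow_eq, monomial_mul_monomial, one_mul, etq, add_comm]

lemma X_pow_mul_X_pow_eq (p q : ℕ) :
    (X 0 : MvPowerSeries (Fin 3) ℚ) ^ p * X 1 ^ q =
      monomial (single 0 p + single 1 q) 1 := by
  rw [X_pow_eq, X_pow_eq, monomial_mul_monomial, one_mul]

lemma ginv_x : (1 - (X 0 : MvPowerSeries (Fin 3) ℚ)) * geom (single 0 1) = 1 := by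
  rw [X_def]
  exact geom_inv _ (by simp)

lemma ginv_y : (1 - (X 1 : MvPowerSeries (Fin 3) ℚ)) * geom (single 1 1) = 1 := by
  rw [X_def]
  exact geom_inv _ (by simp)

lemma ginv_tp (p : ℕ) :
    (1 - (X 2 : MvPowerSeries (Fin 3) ℚ) * X 0 ^ p) * geom (etp p) = 1 := by
  rw [X_mul_X_pow_eq]
  exact geom_inv _ (etp_ne_zero p)

lemma ginv_tq (q : ℕ) :
    (1 - (X 2 : MvPowerSeries (Fin 3) ℚ) * X 1 ^ q) * geom (etq q) = 1 := by
  rw [X_mul_X_pow_eq']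
  exact geom_inv _ (etq_ne_zero q)

end BGaux

open BGaux

namespace BGaux

lemma fBG_decomp (r R : ℕ) (hr : 0 < r) (hR : 0 < R) :
    fBG r R = Tser 1 R + Tser r 1 - Tser r R := by
  set x : MvPowerSeries (Fin 3) ℚ := X 0 with hx
  set y : MvPowerSeries (Fin 3) ℚ := X 1 with hy
  set t : MvPowerSeries (Fin 3) ℚ := X 2 with ht
  set D : MvPowerSeries (Fin 3) ℚ :=
    (1 - t * x ^ r) * (1 - t * y ^ R) * (1 - x) * (1 - y) * (1 - t * x) * (1 - t * y) with hD
  set N : MvPowerSeries (Fin 3) ℚ :=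
    (1 - x * y) * (1 - t * x ^ r) * (1 - t * y ^ R) +
      (1 - t ^ 2) * (x - x ^ r) * (y - y ^ R) with hN
  have hfBG : fBG r R = N * D⁻¹ := rfl
  have hDc : constantCoeff D = 1 := by
    rw [hD]
    simp [hx, hy, ht, constantCoeff_X, zero_pow hr.ne', zero_pow hR.ne']
  have hDinv : D * D⁻¹ = 1 :=
    MvPowerSeries.mul_inv_cancel _ (by rw [hDc]; norm_num)
  have h1 : Tser 1 R * D = (1 - x ^ 1 * y ^ R) * ((1 - t * x ^ r) * (1 - t * y)) := by
    have e : Tser 1 R * D =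
        (1 - monomial (single 0 1 + single 1 R) 1) * ((1 - t * x ^ r) * (1 - t * y)) *
          (((1 - x) * geom (single 0 1)) * ((1 - y) * geom (single 1 1)) *
           ((1 - t * x ^ 1) * geom (etp 1)) * ((1 - t * y ^ R) * geom (etq R))) := by
      rw [Tser, Gser, hD]; ring
    rw [e, ginv_x, ginv_y, ginv_tp, ginv_tq, ← X_pow_mul_X_pow_eq]
    ring
  have h2 : Tser r 1 * D = (1 - x ^ r * y ^ 1) * ((1 - t * y ^ R) * (1 - t * x)) := by
    have e : Tser r 1 * D =
        (1 - monomial (single 0 r + single 1 1) 1) * ((1 - t * y ^ R) * (1 - t * x)) *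
          (((1 - x) * geom (single 0 1)) * ((1 - y) * geom (single 1 1)) *
           ((1 - t * x ^ r) * geom (etp r)) * ((1 - t * y ^ 1) * geom (etq 1))) := by
      rw [Tser, Gser, hD]; ring
    rw [e, ginv_x, ginv_y, ginv_tp, ginv_tq, ← X_pow_mul_X_pow_eq]
    ring
  have h3 : Tser r R * D = (1 - x ^ r * y ^ R) * ((1 - t * x) * (1 - t * y)) := by
    have e : Tser r R * D =
        (1 - monomial (single 0 r + single 1 R) 1) * ((1 - t * x) * (1 - t * y)) *
          (((1 - x) * geom (single 0 1)) * ((1 - y) * geom (single 1 1)) *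
           ((1 - t * x ^ r) * geom (etp r)) * ((1 - t * y ^ R) * geom (etq R))) := by
      rw [Tser, Gser, hD]; ring
    rw [e, ginv_x, ginv_y, ginv_tp, ginv_tq, ← X_pow_mul_X_pow_eq]
    ring
  have key : (Tser 1 R + Tser r 1 - Tser r R) * D = N := by
    rw [sub_mul, add_mul, h1, h2, h3, hN]
    ring
  rw [hfBG, ← key, mul_assoc, hDinv, mul_one]

end BGaux

theorem fBG_nonneg_of_le (r R : ℕ) (hr : 0 < r) (hR : 0 < R)
    (n : ℕ) (hn : n ≤ r) (j k : ℕ) :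
    0 ≤ MvPowerSeries.coeff
      (Finsupp.single 0 j + Finsupp.single 1 k + Finsupp.single 2 n)
      (fBG r R) := by
  have hdd : (Finsupp.single 0 j + Finsupp.single 1 k + Finsupp.single 2 n :
      Fin 3 →₀ ℕ) = dd j k n := rfl
  rw [hdd, fBG_decomp r R hr hR, map_sub, map_add,
    coeff_Tser 1 R one_pos hR j k n, coeff_Tser r 1 hr one_pos j k n,
    coeff_Tser r R hr hR j k n, ← Finset.sum_add_distrib, ← Finset.sum_sub_distrib]
  apply Finset.sum_nonneg
  intro γ _
  have f1 : γ ≤ γ * r := Nat.le_mul_of_pos_right γ hr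
  have f2 : n - γ ≤ (n - γ) * R := Nat.le_mul_of_pos_right _ hR
  simp only [mul_one]
  obtain ⟨P, hP⟩ : ∃ P, P = γ * r := ⟨_, rfl⟩
  obtain ⟨Q, hQ⟩ : ∃ Q, Q = (n - γ) * R := ⟨_, rfl⟩
  rw [← hP] at f1 ⊢
  rw [← hQ] at f2 ⊢
  clear hP hQ
  split_ifs <;> (try norm_num) <;> omega
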